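/- Let U be a finite set, let 𝒮 be a collection of subsets of U, and let p : U → [0,1]. Suppose that for every weight function w : U → ℝ there exists a set S ∈ 𝒮 with Σ_{u ∈ S} w(u) ≥ Σ_{u ∈ U} p(u)·w(u). Then there exist sets S_1, …, S_q ∈ 𝒮 together with coefficients λ_1, …, λ_q ≥ 0 satisfying λ_1 + ⋯ + λ_q = 1 such that Σ_{i : u ∈ S_i} λ_i ≥ p(u) for every u ∈ U. -/

import Mathlib

open Finset Pointwise

/-- **Theorem 4, Carr–Vempala-type result.**
Let `U` be a finite set, `𝒮` a collection of subsets of `U`, and `p : U → [0,1]`.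
If for every weight function `w : U → ℝ` there is a set `S ∈ 𝒮` with
`∑_{u ∈ S} w u ≥ ∑_{u ∈ U} p u * w u`, then there is a finitely supported
probability distribution over sets in `𝒮` whose marginal on each `u ∈ U` is
at least `p u`. -/
theorem exists_distribution_of_weightwise_domination
    {α : Type*} [Fintype α] [DecidableEq α]
    (𝒮 : Set (Finset α)) (p : α → ℝ)
    (hp : ∀ u, 0 ≤ p u ∧ p u ≤ 1)
    (hA : ∀ w : α → ℝ, ∃ S ∈ 𝒮, ∑ u, p u * w u ≤ ∑ u ∈ S, w u) :
    ∃ (q : ℕ) (T : Fin q → Finset α) (lam : Fin q → ℝ),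
      (∀ i, T i ∈ 𝒮) ∧ (∀ i, 0 ≤ lam i) ∧ (∑ i, lam i = 1) ∧
      (∀ u, p u ≤ ∑ i, if u ∈ T i then lam i else 0) := by
  classical
  set χ : Finset α → (α → ℝ) := fun S u => if u ∈ S then 1 else 0 with hχ
  set X : Set (α → ℝ) := χ '' 𝒮 with hX
  have hXfin : X.Finite := (Set.toFinite 𝒮).image _
  set K : Set (α → ℝ) := convexHull ℝ X with hK
  have hKcomp : IsCompact K := hXfin.isCompact_convexHull ℝ
  set C : Set (α → ℝ) := {y | ∀ u, y u ≤ 0} with hC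
  have hCclosed : IsClosed C := by
    have : C = ⋂ u, {y : α → ℝ | y u ≤ 0} := by ext y; simp [hC]
    rw [this]
    exact isClosed_iInter fun u => isClosed_le (continuous_apply u) continuous_const
  have hCconv : Convex ℝ C := by
    intro y hy z hz a b ha hb hab u
    have h1 := hy u; have h2 := hz u
    simp only [Pi.add_apply, Pi.smul_apply, smul_eq_mul]
    nlinarith
  set D : Set (α → ℝ) := C + K with hD
  have hDclosed : IsClosed D := hCclosed.add_right_of_isCompact hKcomp
  have hDconv : Convex ℝ D := hCconv.add (convex_convexHull ℝ X)
  -- every element decomposes as x = ∑ u, x u • single u 1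
  have hdecomp : ∀ x : α → ℝ, x = ∑ u, x u • (Pi.single u 1 : α → ℝ) := by
    intro x
    have : ∀ u, x u • (Pi.single u 1 : α → ℝ) = Pi.single u (x u) := by
      intro u; rw [← Pi.single_smul, smul_eq_mul, mul_one]
    simp_rw [this, Finset.univ_sum_single]
  have hpD : p ∈ D := by
    by_contra hpD
    obtain ⟨f, s, hfD, hsp⟩ := geometric_hahn_banach_closed_point hDconv hDclosed hpD
    set w : α → ℝ := fun u => f (Pi.single u 1) with hw
    have hf : ∀ x : α → ℝ, f x = ∑ u, x u * w u := by
      intro x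
      conv_lhs => rw [hdecomp x]
      rw [map_sum]
      exact Finset.sum_congr rfl fun u _ => by rw [map_smul, smul_eq_mul]
    obtain ⟨S, hS, hSw⟩ := hA w
    have hχSD : χ S ∈ D := by
      have h0 : (0 : α → ℝ) ∈ C := fun u => le_refl 0
      have := Set.add_mem_add h0 (subset_convexHull ℝ X (Set.mem_image_of_mem χ hS))
      simpa using this
    have h1 : f (χ S) < s := hfD _ (by simpa using hχSD)
    have h2 : f (χ S) = ∑ u ∈ S, w u := by
      rw [hf]
      rw [← Finset.sum_filter_add_sum_filter_not Finset.univ (fun u => u ∈ S)]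
      have ha : ∑ u ∈ Finset.univ.filter (fun u => u ∈ S), χ S u * w u = ∑ u ∈ S, w u := by
        rw [Finset.sum_congr rfl (fun u hu => ?_)]
        · congr 1; ext u; simp
        · simp only [Finset.mem_filter] at hu
          simp [hχ, hu.2]
      have hb : ∑ u ∈ Finset.univ.filter (fun u => ¬ u ∈ S), χ S u * w u = 0 := by
        apply Finset.sum_eq_zero
        intro u hu
        simp only [Finset.mem_filter] at hu
        simp [hχ, hu.2]
      rw [ha, hb, add_zero]
    have h3 : f p = ∑ u, p u * w u := hf p
    linarith
  obtain ⟨c, hcC, x, hxK, hxc⟩ := Set.mem_add.1 hpD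
  have hpx : ∀ u, p u ≤ x u := by
    intro u
    have := hcC u
    have : c u + x u = p u := congrFun hxc u
    have hcu : c u ≤ 0 := hcC u
    linarith
  rw [hK, _root_.convexHull_eq] at hxK
  obtain ⟨ι, t, w, z, hw0, hw1, hz, hx⟩ := hxK
  have hz' : ∀ i ∈ t, ∃ S, S ∈ 𝒮 ∧ χ S = z i := fun i hi => hz i hi
  choose Sf hSf1 hSf2 using hz'
  refine ⟨t.card, fun i => Sf (t.equivFin.symm i).1 (t.equivFin.symm i).2,
    fun i => w (t.equivFin.symm i).1, fun i => hSf1 _ _, fun i => hw0 _ (t.equivFin.symm i).2,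
    ?_, ?_⟩
  · have h := Fintype.sum_equiv t.equivFin (fun a : {x : ι // x ∈ t} => w a.1)
      (fun i => w (t.equivFin.symm i).1) (fun a => by simp)
    rw [← h, ← Finset.attach_eq_univ, Finset.sum_attach t w]
    exact hw1
  · intro u
    refine le_trans (hpx u) ?_
    have hxeq : x = ∑ i ∈ t, w i • z i := by
      rw [← hx, Finset.centerMass_eq_of_sum_1 _ _ hw1]
    have hxu : x u = ∑ i ∈ t, w i * z i u := by
      rw [hxeq]; rw [Finset.sum_apply]; rfl
    have key : ∀ a : {x // x ∈ t},
        w a.1 * z a.1 u = if u ∈ Sf a.1 a.2 then w a.1 else 0 := by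
      rintro ⟨i, hi⟩
      rw [← hSf2 i hi]
      simp only [hχ]
      split <;> simp
    calc x u = ∑ i ∈ t, w i * z i u := hxu
      _ = ∑ a ∈ t.attach, w a.1 * z a.1 u := (Finset.sum_attach t _).symm
      _ = ∑ a ∈ t.attach, (if u ∈ Sf a.1 a.2 then w a.1 else 0) :=
          Finset.sum_congr rfl fun a _ => key a
      _ = ∑ i : Fin t.card, (if u ∈ Sf (t.equivFin.symm i).1 (t.equivFin.symm i).2
            then w (t.equivFin.symm i).1 else 0) := by
          rw [Finset.attach_eq_univ]
          exact Fintype.sum_equiv t.equivFin _ _ (fun a => by simp)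
      _ ≤ _ := le_refl _
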